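/- For all integers k ≥ 1, t ≥ 2, and Δ ≥ 2t−2 with k odd, there exists a graph with maximum degree Δ, diameter k, treewidth at most t, and at least (1/2)(t+1)(Δ−1)^{(k−1)/2} vertices. -/

import Mathlib

/-- A graph is chordal if every cycle of length at least 4 has a chord, i.e.
an edge of the graph joining two vertices of the cycle that is not an edge of
the cycle. (Equivalently, every induced cycle is a triangle.) -/
def IsChordal {V : Type*} (H : SimpleGraph V) : Prop :=
  ∀ (v : V) (c : H.Walk v v), c.IsCycle → 4 ≤ c.length →
    ∃ x y, x ∈ c.support ∧ y ∈ c.support ∧ H.Adj x y ∧ s(x, y) ∉ c.edges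

/-- `G` has treewidth at most `t`: `G` is a spanning subgraph of a chordal graph
with no clique on `t + 2` vertices. -/
def TreewidthLE {V : Type*} (G : SimpleGraph V) (t : ℕ) : Prop :=
  ∃ H : SimpleGraph V, G ≤ H ∧ IsChordal H ∧ H.CliqueFree (t + 2)

namespace TWLB
open SimpleGraph

/-- Validity of a tree address (most recent step first): all entries `< D`
except the last one (the step from the root) which is `< r`. -/
def Ok (D r : ℕ) : List ℕ → Prop
  | [] => True
  | a :: l => (a < if l = [] then r else D) ∧ Ok D r l

lemma ok_nil {D r : ℕ} : Ok D r [] := trivial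

lemma Ok.tail {D r a : ℕ} {l : List ℕ} (h : Ok D r (a :: l)) : Ok D r l := h.2

lemma Ok.head_lt {D r a : ℕ} {l : List ℕ} (h : Ok D r (a :: l)) :
    a < if l = [] then r else D := h.1

lemma ok_append {D r a : ℕ} {l : List ℕ} (hl : ∀ x ∈ l, x < D) (ha : a < r) :
    Ok D r (l ++ [a]) := by
  induction l with
  | nil => exact ⟨by simpa using ha, trivial⟩
  | cons b l ih =>
      refine ⟨?_, ih fun x hx => hl x (List.mem_cons_of_mem _ hx)⟩
      rw [if_neg (by simp)]
      exact hl b List.mem_cons_self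

lemma Ok.entry_lt {D r : ℕ} {l : List ℕ} (h : Ok D r l) : ∀ x ∈ l, x < D + r + 1 := by
  induction l with
  | nil => simp
  | cons b l ih =>
      intro x hx
      rcases List.mem_cons.mp hx with rfl | hx
      · have := h.1
        split at this <;> omega
      · exact ih h.2 x hx

/-- The vertex type: a core index together with a tree address. -/
abbrev Vt (t m D r : ℕ) := Fin (t + 1) × {l : List ℕ // l.length ≤ m ∧ Ok D r l}

/-- The graph: core vertices (empty address) form a clique; each tree vertex is
adjacent to its parent (obtained by dropping the head of the address). -/
def myG (t m D r : ℕ) : SimpleGraph (Vt t m D r) where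
  Adj u v := (u.1 ≠ v.1 ∧ u.2.1 = [] ∧ v.2.1 = []) ∨
             (u.1 = v.1 ∧ v.2.1 = u.2.1.tail ∧ u.2.1 ≠ []) ∨
             (u.1 = v.1 ∧ u.2.1 = v.2.1.tail ∧ v.2.1 ≠ [])
  symm := by
    refine ⟨?_⟩
    rintro u v (⟨h1, h2, h3⟩ | ⟨h1, h2, h3⟩ | ⟨h1, h2, h3⟩)
    · exact Or.inl ⟨h1.symm, h3, h2⟩
    · exact Or.inr (Or.inr ⟨h1.symm, h2, h3⟩)
    · exact Or.inr (Or.inl ⟨h1.symm, h2, h3⟩)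
  loopless := by
    refine ⟨?_⟩
    rintro u (⟨h1, _, _⟩ | ⟨_, h2, h3⟩ | ⟨_, h2, h3⟩)
    · exact h1 rfl
    all_goals {
      have := congrArg List.length h2
      have hlen : u.2.1.length ≠ 0 := fun hl => h3 (List.length_eq_zero_iff.mp hl)
      simp [List.length_tail] at this
      omega }

variable {t m D r : ℕ}

lemma adj_length {u v : Vt t m D r} (h : (myG t m D r).Adj u v) :
    (u.2.1 = [] ∧ v.2.1 = []) ∨ u.2.1.length = v.2.1.length + 1 ∨
      v.2.1.length = u.2.1.length + 1 := by
  rcases h with ⟨_, h2, h3⟩ | ⟨_, h2, h3⟩ | ⟨_, h2, h3⟩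
  · exact Or.inl ⟨h2, h3⟩
  · refine Or.inr (Or.inl ?_)
    have hL := congrArg List.length h2
    have hz : u.2.1.length ≠ 0 := fun hl => h3 (List.length_eq_zero_iff.mp hl)
    simp only [List.length_tail] at hL
    omega
  · refine Or.inr (Or.inr ?_)
    have hL := congrArg List.length h2
    have hz : v.2.1.length ≠ 0 := fun hl => h3 (List.length_eq_zero_iff.mp hl)
    simp only [List.length_tail] at hL
    omega

/-- If `u` is not a core vertex, any neighbour of `u` that is not deeper than `u`
is the (unique) parent of `u`. -/
lemma parent_of_adj {u v : Vt t m D r} (h : (myG t m D r).Adj u v)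
    (hlen : v.2.1.length ≤ u.2.1.length) (hne : u.2.1 ≠ []) :
    v.1 = u.1 ∧ v.2.1 = u.2.1.tail := by
  rcases h with ⟨_, h2, _⟩ | ⟨h1, h2, _⟩ | ⟨h1, h2, h3⟩
  · exact absurd h2 hne
  · exact ⟨h1.symm, h2⟩
  · exfalso
    have hL := congrArg List.length h2
    have hz : v.2.1.length ≠ 0 := fun hl => h3 (List.length_eq_zero_iff.mp hl)
    simp only [List.length_tail] at hL
    omega


section WalkIndex

variable {V : Type*} {G : SimpleGraph V}

lemma support_get {a b : V} (p : G.Walk a b) :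
    ∀ (i : ℕ) (h : i < p.support.length), p.support.get ⟨i, h⟩ = p.getVert i := by
  induction p with
  | nil => intro i h; simp at h; subst h; rfl
  | cons hadj q ih =>
      intro i h
      cases i with
      | zero => rfl
      | succ i =>
          simp only [Walk.support_cons, List.get_cons_succ, Walk.getVert_cons_succ]
          exact ih i (by simpa [Walk.support_cons] using h)

lemma edges_get {a b : V} (p : G.Walk a b) :
    ∀ (i : ℕ) (h : i < p.length),
      p.edges.get ⟨i, by rwa [Walk.length_edges]⟩ = s(p.getVert i, p.getVert (i + 1)) := by
  induction p with
  | nil => intro i h; simp at h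
  | cons hadj q ih =>
      intro i h
      cases i with
      | zero => simp [Walk.edges_cons, Walk.getVert_zero, Walk.getVert_cons_succ]
      | succ i =>
          simp only [Walk.edges_cons, List.get_cons_succ, Walk.getVert_cons_succ]
          exact ih i (by simpa [Walk.length_cons] using h)

lemma getVert_mem_support {a b : V} (p : G.Walk a b) {i : ℕ} (h : i ≤ p.length) :
    p.getVert i ∈ p.support :=
  Walk.mem_support_iff_exists_getVert.mpr ⟨i, rfl, h⟩

/-- Positions `1, …, L` of a cycle carry pairwise distinct vertices. -/
lemma cycle_getVert_inj {a : V} {c : G.Walk a a} (hc : c.IsCycle)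
    {i j : ℕ} (hi1 : 1 ≤ i) (hi2 : i ≤ c.length) (hj1 : 1 ≤ j) (hj2 : j ≤ c.length)
    (h : c.getVert i = c.getVert j) : i = j := by
  have hnd : c.support.tail.Nodup := hc.2
  have hlen : c.support.length = c.length + 1 := Walk.length_support c
  have htl : c.support.tail.length = c.length := by
    simp [List.length_tail, hlen]
  have hgt : ∀ (n : ℕ) (hn : n < c.support.tail.length),
      c.support.tail.get ⟨n, hn⟩ = c.getVert (n + 1) := by
    intro n hn
    have h1 : n + 1 < c.support.length := by omega
    have := support_get c (n + 1) h1
    rwa [← List.get_tail _ _ (by omega) (by omega)] at this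
    -- fallback handled below if name wrong
  have h2 : c.support.tail.get ⟨i - 1, by omega⟩ = c.support.tail.get ⟨j - 1, by omega⟩ := by
    rw [hgt, hgt, Nat.sub_add_cancel hi1, Nat.sub_add_cancel hj1]; exact h
  have h3 := congrArg Fin.val (hnd.get_inj_iff.mp h2)
  simp only at h3
  omega

/-- Edges of a trail at distinct positions are distinct; contrapositive form. -/
lemma cycle_edge_inj {a : V} {c : G.Walk a a} (hc : c.IsCycle)
    {i j : ℕ} (hi : i < c.length) (hj : j < c.length)
    (h : s(c.getVert i, c.getVert (i + 1)) = s(c.getVert j, c.getVert (j + 1))) : i = j := by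
  have hnd : c.edges.Nodup := hc.edges_nodup
  have h2 : c.edges.get ⟨i, by rwa [Walk.length_edges]⟩ =
      c.edges.get ⟨j, by rwa [Walk.length_edges]⟩ := by
    rw [edges_get c i hi, edges_get c j hj]; exact h
  have h3 := congrArg Fin.val (hnd.get_inj_iff.mp h2)
  simpa using h3

end WalkIndex

lemma cycle_support_core {v : Vt t m D r} {c : (myG t m D r).Walk v v} (hc : c.IsCycle) :
    ∀ u ∈ c.support, u.2.1 = [] := by
  by_contra hcon
  push_neg at hcon
  obtain ⟨u, hu, hune⟩ := hcon
  have hL3 : 3 ≤ c.length := hc.three_le_length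
  have hgv0 : c.getVert c.length = c.getVert 0 := by
    rw [Walk.getVert_length, Walk.getVert_zero]
  obtain ⟨n0, hn0, hn0le⟩ := Walk.mem_support_iff_exists_getVert.mp hu
  have hex : ∃ n ∈ Finset.range c.length, (c.getVert n).2.1 ≠ [] := by
    rcases eq_or_lt_of_le hn0le with heq | hlt
    · exact ⟨0, Finset.mem_range.mpr (by omega), by rw [← hgv0, ← heq, hn0]; exact hune⟩
    · exact ⟨n0, Finset.mem_range.mpr hlt, by rw [hn0]; exact hune⟩
  obtain ⟨i, hiL, hmax⟩ := Finset.exists_max_image (Finset.range c.length)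
    (fun n => (c.getVert n).2.1.length) ⟨hex.choose, hex.choose_spec.1⟩
  rw [Finset.mem_range] at hiL
  have hmaxAll : ∀ n, n ≤ c.length → (c.getVert n).2.1.length ≤ (c.getVert i).2.1.length := by
    intro n hn
    rcases eq_or_lt_of_le hn with heq | hlt
    · rw [heq, hgv0]; exact hmax 0 (Finset.mem_range.mpr (by omega))
    · exact hmax n (Finset.mem_range.mpr hlt)
  have hne : (c.getVert i).2.1 ≠ [] := by
    obtain ⟨n, hnr, hnne⟩ := hex
    have h1 : 1 ≤ (c.getVert n).2.1.length := by
      rcases Nat.eq_zero_or_pos (c.getVert n).2.1.length with h | h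
      · exact absurd (List.length_eq_zero_iff.mp h) hnne
      · exact h
    have := hmax n hnr
    intro hnil
    rw [hnil] at this
    simp only [List.length_nil, Nat.le_zero] at this
    omega
  -- the successor neighbour is the parent
  have hadj1 : (myG t m D r).Adj (c.getVert i) (c.getVert (i + 1)) :=
    Walk.adj_getVert_succ c hiL
  have hp1 := parent_of_adj hadj1 (hmaxAll (i + 1) (by omega)) hne
  -- the predecessor neighbour is the parent
  set j := if i = 0 then c.length - 1 else i - 1 with hj
  have hjL : j < c.length := by simp only [hj]; split <;> omega
  have hj1 : c.getVert (j + 1) = c.getVert i := by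
    simp only [hj]
    split
    · rename_i h0
      rw [show c.length - 1 + 1 = c.length by omega, hgv0, h0]
    · congr 1; omega
  have hadj2 : (myG t m D r).Adj (c.getVert i) (c.getVert j) := by
    have := Walk.adj_getVert_succ c hjL
    rw [hj1] at this
    exact this.symm
  have hp2 := parent_of_adj hadj2 (hmaxAll j (by omega)) hne
  -- hence the two incident cycle edges coincide
  have hxy : c.getVert (i + 1) = c.getVert j :=
    Prod.ext (hp1.1.trans hp2.1.symm) (Subtype.ext (hp1.2.trans hp2.2.symm))
  have hedge : s(c.getVert i, c.getVert (i + 1)) = s(c.getVert j, c.getVert (j + 1)) := by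
    rw [hj1, hxy, Sym2.eq_swap]
  have := cycle_edge_inj hc hiL hjL hedge
  simp only [hj] at this
  split at this <;> omega

theorem chordal_myG : IsChordal (myG t m D r) := by
  intro v c hc hlen4
  have hcore := cycle_support_core hc
  have hx : c.getVert 1 ∈ c.support := getVert_mem_support c (by omega)
  have hy : c.getVert 3 ∈ c.support := getVert_mem_support c (by omega)
  have hxc : (c.getVert 1).2.1 = [] := hcore _ hx
  have hyc : (c.getVert 3).2.1 = [] := hcore _ hy
  have hxy : c.getVert 1 ≠ c.getVert 3 := by
    intro h
    have := cycle_getVert_inj hc (by omega) (by omega) (by omega) (by omega) h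
    omega
  have hadj : (myG t m D r).Adj (c.getVert 1) (c.getVert 3) :=
    Or.inl ⟨fun h1 => hxy (Prod.ext h1 (Subtype.ext (hxc.trans hyc.symm))), hxc, hyc⟩
  refine ⟨c.getVert 1, c.getVert 3, hx, hy, hadj, ?_⟩
  intro hmem
  obtain ⟨idx, hidx⟩ := List.mem_iff_get.mp hmem
  have hgv0' : c.getVert c.length = c.getVert 0 := by
    rw [Walk.getVert_length, Walk.getVert_zero]
  have hidxL : idx.1 < c.length := lt_of_lt_of_le idx.2 (le_of_eq (Walk.length_edges c))
  have hgete : c.edges.get idx = s(c.getVert idx.1, c.getVert (idx.1 + 1)) := by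
    rw [← edges_get c idx.1 hidxL]
  have heq : s(c.getVert idx.1, c.getVert (idx.1 + 1)) = s(c.getVert 1, c.getVert 3) := by
    rw [← hgete, hidx]
  rcases Sym2.eq_iff.mp heq with ⟨h1, h2⟩ | ⟨h1, h2⟩
  · by_cases h0 : idx.1 = 0
    · have hL1 : c.getVert c.length = c.getVert 1 := hgv0'.trans (h0 ▸ h1)
      have := cycle_getVert_inj hc (i := c.length) (j := 1) (by omega) le_rfl (by omega)
        (by omega) hL1
      omega
    · have e1 := cycle_getVert_inj hc (i := idx.1) (j := 1) (by omega) (by omega) (by omega)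
        (by omega) h1
      have e2 := cycle_getVert_inj hc (i := idx.1 + 1) (j := 3) (by omega) (by omega) (by omega)
        (by omega) h2
      omega
  · have e2 := cycle_getVert_inj hc (i := idx.1 + 1) (j := 1) (by omega) (by omega) (by omega)
      (by omega) h2
    have h0 : idx.1 = 0 := by omega
    have hL3 : c.getVert c.length = c.getVert 3 := hgv0'.trans (h0 ▸ h1)
    have := cycle_getVert_inj hc (i := c.length) (j := 3) (by omega) le_rfl (by omega)
      (by omega) hL3
    omega

lemma no_common_neighbors {u a b : Vt t m D r} (hu : u.2.1 ≠ []) (hab : a ≠ b)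
    (h1 : (myG t m D r).Adj u a) (h2 : (myG t m D r).Adj u b) :
    ¬ (myG t m D r).Adj a b := by
  intro h3
  have hul : u.2.1.length ≠ 0 := fun h => hu (List.length_eq_zero_iff.mp h)
  rcases adj_length h1 with ⟨h, _⟩ | hA | hA
  · exact hu h
  -- a is the parent of u
  · rcases adj_length h2 with ⟨h, _⟩ | hB | hB
    · exact hu h
    · -- b is also the parent of u : a = b
      have pa := parent_of_adj h1 (by omega) hu
      have pb := parent_of_adj h2 (by omega) hu
      exact hab (Prod.ext (pa.1.trans pb.1.symm) (Subtype.ext (pa.2.trans pb.2.symm)))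
    · -- a parent, b child
      rcases adj_length h3 with ⟨ha0, hb0⟩ | hC | hC
      · have := congrArg List.length hb0; simp only [List.length_nil] at this; omega
      · omega
      · omega
  -- a is a child of u
  · rcases adj_length h2 with ⟨h, _⟩ | hB | hB
    · exact hu h
    · rcases adj_length h3 with ⟨ha0, hb0⟩ | hC | hC
      · have := congrArg List.length ha0; simp only [List.length_nil] at this; omega
      · omega
      · omega
    · rcases adj_length h3 with ⟨ha0, hb0⟩ | hC | hC
      · have := congrArg List.length ha0; simp only [List.length_nil] at this; omega
      · omega
      · omega

theorem cliquefree_myG (ht : 1 ≤ t) : (myG t m D r).CliqueFree (t + 2) := by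
  intro s hs
  by_cases hall : ∀ u ∈ s, u.2.1 = ([] : List ℕ)
  · have hinj : Set.InjOn Prod.fst (s : Set (Vt t m D r)) := by
      intro x hx y hy hxy
      exact Prod.ext hxy (Subtype.ext (by
        rw [hall x hx, hall y hy]))
    have hcard := Finset.card_le_card_of_injOn Prod.fst
      (fun x _ => Finset.mem_univ x.1) hinj
    rw [hs.card_eq] at hcard
    simp only [Finset.card_univ, Fintype.card_fin] at hcard
    omega
  · push_neg at hall
    obtain ⟨u, hus, hune⟩ := hall
    have hcard : 1 < (s.erase u).card := by
      rw [Finset.card_erase_of_mem hus, hs.card_eq]; omega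
    obtain ⟨a, ha, b, hb, hab⟩ := Finset.one_lt_card.mp hcard
    have hau := Finset.mem_erase.mp ha
    have hbu := Finset.mem_erase.mp hb
    have h1 : (myG t m D r).Adj u a :=
      hs.1 (Finset.mem_coe.mpr hus) (Finset.mem_coe.mpr hau.2) (Ne.symm hau.1)
    have h2 : (myG t m D r).Adj u b :=
      hs.1 (Finset.mem_coe.mpr hus) (Finset.mem_coe.mpr hbu.2) (Ne.symm hbu.1)
    have h3 : (myG t m D r).Adj a b :=
      hs.1 (Finset.mem_coe.mpr hau.2) (Finset.mem_coe.mpr hbu.2) hab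
    exact no_common_neighbors hune hab h1 h2 h3

lemma Ok.tail' {l : List ℕ} (h : Ok D r l) : Ok D r l.tail := by
  cases l with
  | nil => trivial
  | cons a l => exact h.2

lemma valid_cons {a : ℕ} {l : List ℕ} (h : (a :: l).length ≤ m ∧ Ok D r (a :: l)) :
    l.length ≤ m ∧ Ok D r l :=
  ⟨by have := h.1; simp only [List.length_cons] at this; omega, h.2.2⟩

def rootV (i : Fin (t + 1)) : Vt t m D r := (i, ⟨[], ⟨Nat.zero_le m, trivial⟩⟩)

def walkToRoot (i : Fin (t + 1)) : (l : List ℕ) → (h : l.length ≤ m ∧ Ok D r l) →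
    (myG t m D r).Walk (i, ⟨l, h⟩) (rootV i)
  | [], _ => Walk.nil
  | a :: l, h =>
      Walk.cons (v := (i, ⟨l, valid_cons h⟩)) (Or.inr (Or.inl ⟨rfl, rfl, by simp⟩))
        (walkToRoot i l (valid_cons h))

lemma walkToRoot_length (i : Fin (t + 1)) : ∀ (l : List ℕ) (h : l.length ≤ m ∧ Ok D r l),
    (walkToRoot (t := t) i l h).length = l.length
  | [], _ => rfl
  | a :: l, h => by
      exact congrArg (· + 1) (walkToRoot_length i l (valid_cons h))

lemma reachable_root (u : Vt t m D r) : (myG t m D r).Reachable u (rootV u.1) :=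
  ⟨walkToRoot u.1 u.2.1 u.2.2⟩

lemma connected_myG : (myG t m D r).Connected := by
  rw [SimpleGraph.connected_iff]
  refine ⟨fun u v => ?_, ⟨rootV 0⟩⟩
  refine (reachable_root u).trans (SimpleGraph.Reachable.trans ?_ (reachable_root v).symm)
  by_cases h : u.1 = v.1
  · rw [h]
  · exact SimpleGraph.Adj.reachable
      (show (myG t m D r).Adj (rootV u.1) (rootV v.1) from Or.inl ⟨h, rfl, rfl⟩)

lemma exists_short_walk (u v : Vt t m D r) :
    ∃ p : (myG t m D r).Walk u v, p.length ≤ 2 * m + 1 := by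
  obtain ⟨i, l⟩ := u
  obtain ⟨j, l'⟩ := v
  by_cases h : i = j
  · subst h
    refine ⟨(walkToRoot i l.1 l.2).append (walkToRoot i l'.1 l'.2).reverse, ?_⟩
    rw [Walk.length_append, Walk.length_reverse, walkToRoot_length, walkToRoot_length]
    have := l.2.1
    have := l'.2.1
    omega
  · refine ⟨(walkToRoot i l.1 l.2).append
      (Walk.cons (show (myG t m D r).Adj (rootV i) (rootV j) from Or.inl ⟨h, rfl, rfl⟩)
        (walkToRoot j l'.1 l'.2).reverse), ?_⟩
    rw [Walk.length_append, Walk.length_cons, Walk.length_reverse, walkToRoot_length,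
      walkToRoot_length]
    have := l.2.1
    have := l'.2.1
    omega

lemma nbhd_core (u : Vt t m D r) (hu : u.2.1 = []) :
    ((myG t m D r).neighborSet u).ncard ≤ t + r := by
  classical
  set f : Fin t ⊕ Fin r → Vt t m D r := fun x =>
    match x with
    | .inl j => (u.1.succAbove j, ⟨[], ⟨Nat.zero_le m, trivial⟩⟩)
    | .inr a =>
        if h : 1 ≤ m then (u.1, ⟨[a.1], ⟨h, ⟨by simp only [if_pos rfl]; exact a.2, trivial⟩⟩⟩) else u
    with hf
  have hsub : (myG t m D r).neighborSet u ⊆ Set.range f := by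
    rintro x (⟨hne, hu', hx'⟩ | ⟨heq, hxt, hune⟩ | ⟨heq, hut, hxne⟩)
    · obtain ⟨j, hj⟩ := Fin.exists_succAbove_eq (show x.1 ≠ u.1 from Ne.symm hne)
      exact ⟨.inl j, Prod.ext hj (Subtype.ext hx'.symm)⟩
    · exact absurd hu hune
    · cases hx2 : x.2.1 with
      | nil => exact absurd hx2 hxne
      | cons c l₁ =>
          have htl : l₁ = [] := by
            rw [hx2] at hut
            simp only [List.tail_cons] at hut
            rw [← hut, hu]
          have hok := x.2.2.2
          rw [hx2, htl] at hok
          have hcr : c < r := by simpa using hok.1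
          have hlm : 1 ≤ m := by
            have := x.2.2.1
            rw [hx2] at this
            simp only [List.length_cons] at this
            omega
          refine ⟨.inr ⟨c, hcr⟩, ?_⟩
          simp only [hf, dif_pos hlm]
          exact Prod.ext heq (Subtype.ext (by rw [hx2, htl]))
  calc ((myG t m D r).neighborSet u).ncard ≤ (Set.range f).ncard :=
        Set.ncard_le_ncard hsub (Set.finite_range f)
    _ ≤ t + r := by
        rw [← Set.image_univ]
        have h1 := Set.ncard_image_le (s := (Set.univ : Set (Fin t ⊕ Fin r))) (f := f)
          Set.finite_univ
        simpa [Set.ncard_univ] using h1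

lemma nbhd_tree (u : Vt t m D r) (hu : u.2.1 ≠ []) :
    ((myG t m D r).neighborSet u).ncard ≤ 1 + D := by
  classical
  have hok := u.2.2.2
  set f : Unit ⊕ Fin D → Vt t m D r := fun x =>
    match x with
    | .inl _ => (u.1, ⟨u.2.1.tail, ⟨le_trans (by rw [List.length_tail]; omega) u.2.2.1, hok.tail'⟩⟩)
    | .inr a =>
        if h : u.2.1.length + 1 ≤ m then
          (u.1, ⟨a.1 :: u.2.1, ⟨by simp only [List.length_cons]; exact h, ⟨by rw [if_neg hu]; exact a.2, hok⟩⟩⟩)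
        else u
    with hf
  have hsub : (myG t m D r).neighborSet u ⊆ Set.range f := by
    rintro x (⟨hne, hu', hx'⟩ | ⟨heq, hxt, hune⟩ | ⟨heq, hut, hxne⟩)
    · exact absurd hu' hu
    · exact ⟨.inl (), Prod.ext heq (Subtype.ext hxt.symm)⟩
    · cases hx2 : x.2.1 with
      | nil => exact absurd hx2 hxne
      | cons c l₁ =>
          have htl : l₁ = u.2.1 := by
            rw [hx2] at hut
            simp only [List.tail_cons] at hut
            exact hut.symm
          have hokx := x.2.2.2
          rw [hx2] at hokx
          have hcD : c < D := by
            have := hokx.1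
            rwa [htl, if_neg hu] at this
          have hlm : u.2.1.length + 1 ≤ m := by
            have := x.2.2.1
            rw [hx2, htl] at this
            simpa using this
          refine ⟨.inr ⟨c, hcD⟩, ?_⟩
          simp only [hf, dif_pos hlm]
          exact Prod.ext heq (Subtype.ext (by rw [hx2, htl]))
  calc ((myG t m D r).neighborSet u).ncard ≤ (Set.range f).ncard :=
        Set.ncard_le_ncard hsub (Set.finite_range f)
    _ ≤ 1 + D := by
        rw [← Set.image_univ]
        have h1 := Set.ncard_image_le (s := (Set.univ : Set (Unit ⊕ Fin D))) (f := f)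
          Set.finite_univ
        simpa [Set.ncard_univ] using h1

/-- Encoding of addresses, to get a `Fintype` instance. -/
def encode (l : {l : List ℕ // l.length ≤ m ∧ Ok D r l}) :
    Fin (m + 1) × (Fin m → Fin (D + r + 1)) :=
  (⟨l.1.length, by have := l.2.1; omega⟩,
   fun i => if h : i.1 < l.1.length then
      ⟨l.1.get ⟨i.1, h⟩, l.2.2.entry_lt _ (List.get_mem _ _)⟩
    else ⟨0, by omega⟩)

lemma encode_injective :
    Function.Injective (encode (m := m) (D := D) (r := r)) := by
  intro x y hxy
  have h1 := congrArg Prod.fst hxy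
  have h2 := congrArg Prod.snd hxy
  simp only [encode] at h1 h2
  have hlen : x.1.length = y.1.length := by
    have := congrArg Fin.val h1
    simpa using this
  refine Subtype.ext (List.ext_get hlen ?_)
  intro n hn1 hn2
  have hnm : n < m := by have := x.2.1; omega
  have := congrFun h2 ⟨n, hnm⟩
  simp only [dif_pos hn1, dif_pos hn2] at this
  exact congrArg Fin.val this

noncomputable instance : Fintype {l : List ℕ // l.length ≤ m ∧ Ok D r l} :=
  Fintype.ofInjective encode encode_injective

/-- Injection witnessing the size lower bound. -/
def dec : Unit ⊕ (Fin r × Σ d : Fin m, (Fin d → Fin D)) →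
    {l : List ℕ // l.length ≤ m ∧ Ok D r l}
  | .inl _ => ⟨[], ⟨Nat.zero_le _, trivial⟩⟩
  | .inr (a, ⟨d, f⟩) =>
      ⟨(List.ofFn fun j => (f j).1) ++ [a.1],
        ⟨by simp only [List.length_append, List.length_ofFn, List.length_cons,
              List.length_nil]; have := d.2; omega,
         ok_append (fun x hx => by
            obtain ⟨j, hj⟩ := List.mem_ofFn.mp hx
            rw [← hj]; exact (f j).2) a.2⟩⟩

lemma dec_injective : Function.Injective (dec (m := m) (D := D) (r := r)) := by
  rintro (x | ⟨a, d, f⟩) (y | ⟨b, e, g⟩) hxy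
  · rfl
  · exfalso
    have := congrArg (fun z => z.1) hxy
    simp only [dec] at this
    exact List.append_ne_nil_of_right_ne_nil _ (by simp) this.symm
  · exfalso
    have := congrArg (fun z => z.1) hxy
    simp only [dec] at this
    exact List.append_ne_nil_of_right_ne_nil _ (by simp) this
  · have hl := congrArg (fun z => z.1) hxy
    simp only [dec] at hl
    have hlen : (List.ofFn fun j => (f j).1).length = (List.ofFn fun j => (g j).1).length := by
      have := congrArg List.length hl
      simp only [List.length_append, List.length_cons, List.length_nil] at this
      omega
    obtain ⟨h1, h2⟩ := List.append_inj hl hlen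
    have hde : d = e := by
      have := congrArg List.length h1
      simp only [List.length_ofFn] at this
      exact Fin.ext this
    subst hde
    have hab : a = b := by
      have : a.1 = b.1 := by simpa using h2
      exact Fin.ext this
    have hfg : f = g := funext fun j => Fin.ext (congrFun (List.ofFn_inj.mp h1) j)
    rw [hab, hfg]

lemma card_L_lower :
    1 + r * ∑ d ∈ Finset.range m, D ^ d ≤
      Fintype.card {l : List ℕ // l.length ≤ m ∧ Ok D r l} := by
  classical
  have hinj := Fintype.card_le_of_injective _ (dec_injective (m := m) (D := D) (r := r))
  calc 1 + r * ∑ d ∈ Finset.range m, D ^ d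
      = Fintype.card (Unit ⊕ (Fin r × Σ d : Fin m, (Fin d → Fin D))) := by
        simp [Fintype.card_sigma, Fintype.card_fun, Fin.sum_univ_eq_sum_range]
    _ ≤ _ := hinj

lemma geom_le (D n : ℕ) : D ^ n ≤ (D - 1) * (∑ d ∈ Finset.range n, D ^ d) + 1 := by
  rcases Nat.eq_zero_or_pos D with rfl | hD
  · have h0 : (0 : ℕ) ^ n ≤ 1 := by cases n <;> simp
    exact le_trans h0 (Nat.le_add_left 1 _)
  · induction n with
    | zero => simp
    | succ n ih =>
      rw [Finset.sum_range_succ, pow_succ]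
      have hX : D ^ n * D = (D - 1) * D ^ n + D ^ n := by
        have h1 : (D - 1) * D ^ n + D ^ n = ((D - 1) + 1) * D ^ n := by ring
        rw [h1, Nat.sub_add_cancel hD, Nat.mul_comm]
      calc D ^ n * D = (D - 1) * D ^ n + D ^ n := hX
        _ ≤ (D - 1) * D ^ n + ((D - 1) * (∑ d ∈ Finset.range n, D ^ d) + 1) := by omega
        _ = (D - 1) * ((∑ d ∈ Finset.range n, D ^ d) + D ^ n) + 1 := by ring

lemma count_bound (hDr : D ≤ 2 * r + 1) :
    (t + 1) * D ^ m ≤ 2 * Fintype.card (Vt t m D r) := by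
  classical
  have hcardV : Fintype.card (Vt t m D r) =
      (t + 1) * Fintype.card {l : List ℕ // l.length ≤ m ∧ Ok D r l} := by
    rw [Fintype.card_prod, Fintype.card_fin]
  have hL := card_L_lower (m := m) (D := D) (r := r)
  have hg := geom_le D m
  set S := ∑ d ∈ Finset.range m, D ^ d with hS
  have h4 : (D - 1) * S ≤ 2 * (r * S) :=
    calc (D - 1) * S ≤ (2 * r) * S := Nat.mul_le_mul_right S (by omega)
      _ = 2 * (r * S) := by ring
  have h1 : D ^ m ≤ 2 * (1 + r * S) := by
    set X := r * S
    set Y := (D - 1) * S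
    set Z := D ^ m
    omega
  calc (t + 1) * D ^ m ≤ (t + 1) * (2 * (1 + r * S)) := Nat.mul_le_mul_left _ h1
    _ = 2 * ((t + 1) * (1 + r * S)) := by ring
    _ ≤ 2 * ((t + 1) * Fintype.card {l : List ℕ // l.length ≤ m ∧ Ok D r l}) := by
        have := Nat.mul_le_mul_left (t + 1) hL
        omega
    _ = 2 * Fintype.card (Vt t m D r) := by rw [hcardV]

end TWLB

open SimpleGraph

/-- For all integers `k ≥ 1`, `t ≥ 2`, and `Δ ≥ 2t−2` with `k` odd, there
exists a graph with maximum degree at most `Δ`, diameter at most `k`, treewidth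
at most `t`, and at least `(1/2)(t+1)(Δ−1)^{(k−1)/2}` vertices. -/
theorem treewidth_lower_bound_odd (k t Δ : ℕ) (hk : 1 ≤ k) (hodd : Odd k)
    (ht : 2 ≤ t) (hΔ : 2 * t - 2 ≤ Δ) :
    ∃ (n : ℕ) (G : SimpleGraph (Fin n)),
      (∀ v, (G.neighborSet v).ncard ≤ Δ) ∧
      G.Connected ∧
      (∀ u v, G.dist u v ≤ k) ∧
      TreewidthLE G t ∧
      (t + 1) * (Δ - 1) ^ ((k - 1) / 2) ≤ 2 * n := by
  classical
  obtain ⟨m, hm⟩ := hodd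
  have hkm : k = 2 * m + 1 := by omega
  have htΔ : t ≤ Δ := by omega
  have hΔ2 : 2 ≤ Δ := by omega
  set D := Δ - 1 with hD
  set r := Δ - t with hr
  set V := TWLB.Vt t m D r with hV
  set G0 := TWLB.myG t m D r with hG0
  have hNE : Nonempty V := ⟨TWLB.rootV 0⟩
  set n := Fintype.card V with hn
  set e := Fintype.equivFin V with he
  set φ := SimpleGraph.Iso.map e G0 with hφ
  refine ⟨n, G0.map e.toEmbedding, ?_, ?_, ?_, ?_, ?_⟩
  · -- degree bound
    intro v
    have himg : (G0.map e.toEmbedding).neighborSet v = e '' (G0.neighborSet (e.symm v)) := by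
      ext x
      simp only [mem_neighborSet, SimpleGraph.map_adj, Set.mem_image]
      constructor
      · rintro ⟨a, b, hab, ha, hb⟩
        refine ⟨b, ?_, hb⟩
        rwa [show a = e.symm v from by rw [← ha]; simp] at hab
      · rintro ⟨b, hb, hbx⟩
        exact ⟨e.symm v, b, hb, by simp, hbx⟩
    rw [himg, Set.ncard_image_of_injective _ e.injective]
    by_cases hcore : (e.symm v).2.1 = []
    · have h2 := TWLB.nbhd_core _ hcore
      rw [← hG0] at h2
      omega
    · have h2 := TWLB.nbhd_tree _ hcore
      rw [← hG0] at h2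
      omega
  · -- connected
    exact TWLB.connected_myG.map φ.toHom φ.toEquiv.surjective
  · -- diameter
    intro u v
    obtain ⟨p, hp⟩ := TWLB.exists_short_walk (e.symm u) (e.symm v)
    refine le_trans
      (SimpleGraph.dist_le ((p.map φ.toHom).copy (by simp [hφ]) (by simp [hφ]))) ?_
    rw [Walk.length_copy, Walk.length_map]
    omega
  · -- treewidth
    refine ⟨G0.map e.toEmbedding, le_refl _, ?_, ?_⟩
    · -- chordal
      intro w c hc hlen
      have hinj : Function.Injective ⇑φ.symm.toHom := φ.symm.toEquiv.injective
      have hc' : (c.map φ.symm.toHom).IsCycle :=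
        (Walk.map_isCycle_iff_of_injective hinj).mpr hc
      obtain ⟨x, y, hxs, hys, hadj, hne⟩ := TWLB.chordal_myG _ (c.map φ.symm.toHom) hc'
        (by rw [Walk.length_map]; exact hlen)
      rw [Walk.support_map] at hxs hys
      obtain ⟨x0, hx0, hx0e⟩ := List.mem_map.mp hxs
      obtain ⟨y0, hy0, hy0e⟩ := List.mem_map.mp hys
      have hxe : φ x = x0 := by rw [← hx0e]; simp
      have hye : φ y = y0 := by rw [← hy0e]; simp
      refine ⟨φ x, φ y, hxe ▸ hx0, hye ▸ hy0, φ.map_adj_iff.mpr hadj, ?_⟩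
      intro hmem
      apply hne
      have hmm : Sym2.map ⇑φ.symm.toHom s(φ x, φ y) ∈ c.edges.map (Sym2.map ⇑φ.symm.toHom) :=
        List.mem_map_of_mem hmem
      rw [← Walk.edges_map] at hmm
      simpa using hmm
    · -- clique free
      rw [SimpleGraph.cliqueFree_map_iff]
      exact TWLB.cliquefree_myG (by omega)
  · -- vertex count
    have hmk : (k - 1) / 2 = m := by omega
    rw [hmk]
    exact TWLB.count_bound (by omega)
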